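/- Let α > 0, γ > 0, set τ = √(α² + γ), cmmse(γ) = (τ − α)/γ and mmse(γ) = 1/(2τ). Define lmmse(d,γ) = (1 − e^{−2dτ})·mmse(γ) + e^{−2dτ}·cmmse(γ) for d ≥ 0. Then (lmmse(d,γ) − mmse(γ))/(cmmse(γ) − mmse(γ)) = e^{−d/mmse(γ)} for all d ≥ 0. -/

import Mathlib

open Real

/-- Exponential convergence of the finite-lookahead MMSE of the OU process:
the normalized gap decays as `exp (-d / mmse γ)`. -/
theorem ou_lmmse_exponential_decay (α γ : ℝ) (hα : 0 < α) (hγ : 0 < γ)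
    (τ cmmse mmse : ℝ)
    (hτ : τ = Real.sqrt (α ^ 2 + γ))
    (hc : cmmse = (τ - α) / γ) (hm : mmse = 1 / (2 * τ))
    (lmmse : ℝ → ℝ)
    (hl : ∀ d, lmmse d = (1 - Real.exp (-2 * d * τ)) * mmse + Real.exp (-2 * d * τ) * cmmse) :
    ∀ d : ℝ, 0 ≤ d →
      (lmmse d - mmse) / (cmmse - mmse) = Real.exp (-d / mmse) := by
  have hτpos : 0 < τ := by
    rw [hτ]; exact Real.sqrt_pos.mpr (by positivity)
  have hτsq : τ ^ 2 = α ^ 2 + γ := by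
    rw [hτ]; exact Real.sq_sqrt (by positivity)
  have hατ : α < τ := by
    nlinarith [sq_nonneg (τ - α), sq_nonneg (τ + α)]
  have hcm : cmmse - mmse > 0 := by
    rw [hc, hm]
    rw [gt_iff_lt, sub_pos, div_lt_div_iff₀ (by positivity) hγ]
    nlinarith
  intro d _
  have h1 : lmmse d - mmse = Real.exp (-2 * d * τ) * (cmmse - mmse) := by
    rw [hl d]; ring
  rw [h1, mul_div_assoc, div_self (ne_of_gt hcm), mul_one]
  congr 1
  rw [hm]
  field_simp
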